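/- For every integer d ≥ 1 and every x ∈ ℝ^d, if prog_1(x) < d then ‖∇H_d(x)‖ ≥ 1, where ‖·‖ is the Euclidean norm. -/

import Mathlib

/-- `Ψ(t) = 0` for `t ≤ 1/2` and `Ψ(t) = exp(1 − 1/(2t−1)²)` for `t > 1/2`. -/
noncomputable def Psi (t : ℝ) : ℝ :=
  if t ≤ 1 / 2 then 0 else Real.exp (1 - 1 / (2 * t - 1) ^ 2)

/-- `Φ(t) = √e ∫_{−∞}^{t} exp(−τ²/2) dτ`. -/
noncomputable def Phi (t : ℝ) : ℝ :=
  Real.sqrt (Real.exp 1) * ∫ τ in Set.Iic t, Real.exp (-τ ^ 2 / 2)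

/-- The `i`-th coordinate (1-based, `1 ≤ i ≤ d`) of a vector in `ℝ^d`;
zero when out of range. -/
noncomputable def coord (d : ℕ) (y : EuclideanSpace ℝ (Fin d)) (i : ℕ) : ℝ :=
  if h : i - 1 < d then y ⟨i - 1, h⟩ else 0

/-- The chain function
`H_d(x) = −Ψ(1)Φ(x₁) + ∑_{i=2}^d (Ψ(−x_{i−1})Φ(−x_i) − Ψ(x_{i−1})Φ(x_i))`. -/
noncomputable def Hchain (d : ℕ) (y : EuclideanSpace ℝ (Fin d)) : ℝ :=
  -Psi 1 * Phi (coord d y 1) +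
    ∑ i ∈ Finset.Icc 2 d,
      (Psi (-coord d y (i - 1)) * Phi (-coord d y i) -
        Psi (coord d y (i - 1)) * Phi (coord d y i))

open Classical in
/-- The progress index `prog_a(x) = max({i ∈ {1,…,d} : |x_i| > a} ∪ {0})`. -/
noncomputable def prog (d : ℕ) (a : ℝ) (y : EuclideanSpace ℝ (Fin d)) : ℕ :=
  ((Finset.Icc 1 d).filter fun i => a < |coord d y i|).sup id

open Filter Topology MeasureTheory

/-! ### auxiliary derivatives -/

noncomputable def Psi' (t : ℝ) : ℝ :=
  if t ≤ 1 / 2 then 0 else Real.exp (1 - 1 / (2 * t - 1) ^ 2) * (4 / (2 * t - 1) ^ 3)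

noncomputable def Phi' (t : ℝ) : ℝ := Real.sqrt (Real.exp 1) * Real.exp (-t ^ 2 / 2)

lemma psi_nonneg (t : ℝ) : 0 ≤ Psi t := by
  unfold Psi; split
  · exact le_refl 0
  · positivity

lemma psi'_nonneg (t : ℝ) : 0 ≤ Psi' t := by
  unfold Psi'; split
  · exact le_refl 0
  · rename_i h
    have h1 : 0 < 2 * t - 1 := by push_neg at h; linarith
    positivity

lemma psi_one : Psi 1 = 1 := by norm_num [Psi]

lemma psi_ge_one {t : ℝ} (h : 1 < t) : 1 ≤ Psi t := by
  unfold Psi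
  rw [if_neg (by linarith)]
  rw [Real.one_le_exp_iff]
  have h1 : 1 < 2 * t - 1 := by linarith
  have h2 : 1 ≤ (2 * t - 1) ^ 2 := by nlinarith
  have : 1 / (2 * t - 1) ^ 2 ≤ 1 := by
    rw [div_le_one (by linarith)]; exact h2
  linarith

lemma psi_bound (t : ℝ) : Psi t ≤ 4 * Real.exp 1 * (t - 1/2) ^ 2 := by
  unfold Psi; split
  · positivity
  · rename_i h
    push_neg at h
    have hσ : (0:ℝ) < 2 * t - 1 := by linarith
    have hσ2 : (0:ℝ) < (2 * t - 1) ^ 2 := by positivity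
    set z : ℝ := 1 / (2 * t - 1) ^ 2 with hzdef
    have hz : 0 < z := by positivity
    have h1 : z ≤ Real.exp z := by linarith [Real.add_one_le_exp z]
    have h2 : Real.exp (-z) ≤ 1 / z := by
      rw [Real.exp_neg, one_div]
      exact inv_anti₀ hz h1
    have h3 : (1:ℝ) / z = (2 * t - 1) ^ 2 := by
      rw [hzdef, one_div_one_div]
    have h4 : Real.exp (1 - z) = Real.exp 1 * Real.exp (-z) := by
      rw [← Real.exp_add]; ring_nf
    calc Real.exp (1 - z) ≤ Real.exp 1 * ((2 * t - 1) ^ 2) := by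
          rw [h4]; have := Real.exp_pos 1
          nlinarith [h2, h3]
      _ = 4 * Real.exp 1 * (t - 1/2) ^ 2 := by ring

lemma psi_hasDerivAt (t : ℝ) : HasDerivAt Psi (Psi' t) t := by
  rcases lt_trichotomy t (1/2) with h | h | h
  · have hv : Psi' t = 0 := if_pos h.le
    rw [hv]
    have hev : Psi =ᶠ[𝓝 t] fun _ => 0 := by
      filter_upwards [Iio_mem_nhds h] with s hs
      exact if_pos (le_of_lt hs)
    exact (hasDerivAt_const t 0).congr_of_eventuallyEq hev
  · subst h
    have hv : Psi' (1/2) = 0 := if_pos le_rfl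
    rw [hv, hasDerivAt_iff_tendsto_slope]
    have hb : ∀ s : ℝ, ‖slope Psi (1/2) s‖ ≤ 4 * Real.exp 1 * |s - 1/2| := by
      intro s
      rcases eq_or_ne s (1/2) with rfl | hs
      · simp [slope_def_field]
      · have h0 : Psi (1/2) = 0 := if_pos le_rfl
        have hne : s - 1/2 ≠ 0 := sub_ne_zero.mpr hs
        rw [slope_def_field, h0, sub_zero, Real.norm_eq_abs, abs_div,
          abs_of_nonneg (psi_nonneg s), div_le_iff₀ (abs_pos.mpr hne)]
        have hb := psi_bound s
        have hsq : |s - 1/2| ^ 2 = (s - 1/2) ^ 2 := sq_abs _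
        nlinarith [abs_nonneg (s - 1/2), Real.exp_pos 1]
    have hlim : Tendsto (fun s : ℝ => 4 * Real.exp 1 * |s - 1/2|) (𝓝[≠] (1/2 : ℝ)) (𝓝 0) := by
      have : Tendsto (fun s : ℝ => 4 * Real.exp 1 * |s - 1/2|) (𝓝 (1/2 : ℝ)) (𝓝 0) := by
        have hc : Continuous (fun s : ℝ => 4 * Real.exp 1 * |s - 1/2|) := by
          continuity
        have := hc.tendsto (1/2 : ℝ)
        simpa using this
      exact this.mono_left nhdsWithin_le_nhds
    exact squeeze_zero_norm hb hlim
  · have h2 : (2 * t - 1) ≠ 0 := by linarith [h]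
    have hev : Psi =ᶠ[𝓝 t] fun s => Real.exp (1 - 1 / (2 * s - 1) ^ 2) := by
      filter_upwards [Ioi_mem_nhds h] with s hs
      exact if_neg (by simp only [Set.mem_Ioi] at hs; linarith)
    have h1 : HasDerivAt (fun s : ℝ => 2 * s - 1) 2 t := by
      simpa using ((hasDerivAt_id t).const_mul 2).sub_const 1
    have hsq : HasDerivAt (fun s : ℝ => (2 * s - 1) ^ 2) (2 * (2 * t - 1) ^ 1 * 2) t := h1.pow 2
    have hinv : HasDerivAt (fun s : ℝ => 1 - 1 / (2 * s - 1) ^ 2)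
        (2 * (2 * t - 1) ^ 1 * 2 / ((2 * t - 1) ^ 2) ^ 2) t := by
      have := (hsq.fun_inv (pow_ne_zero 2 h2)).const_sub 1
      simp only [one_div]
      rw [neg_div, neg_neg] at this
      exact this
    have hd := hinv.exp
    refine (hd.congr_of_eventuallyEq hev).congr_deriv ?_
    rw [Psi', if_neg (by linarith)]
    field_simp
    ring

lemma gauss_integrable : Integrable (fun τ : ℝ => Real.exp (-τ ^ 2 / 2)) := by
  have h := integrable_exp_neg_mul_sq (by norm_num : (0:ℝ) < 1/2)
  convert h using 2 with τ
  ring_nf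

lemma gauss_continuous : Continuous (fun τ : ℝ => Real.exp (-τ ^ 2 / 2)) := by
  continuity

lemma phi_hasDerivAt (t : ℝ) : HasDerivAt Phi (Phi' t) t := by
  have hfun : Phi = fun s =>
      Real.sqrt (Real.exp 1) * ((∫ τ in Set.Iic (0:ℝ), Real.exp (-τ ^ 2 / 2))
        + ∫ τ in (0:ℝ)..s, Real.exp (-τ ^ 2 / 2)) := by
    funext s
    unfold Phi
    rw [← intervalIntegral.integral_Iic_sub_Iic (gauss_integrable.integrableOn)
      (gauss_integrable.integrableOn)]
    ring
  rw [hfun]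
  have hd : HasDerivAt (fun s => ∫ τ in (0:ℝ)..s, Real.exp (-τ ^ 2 / 2))
      (Real.exp (-t ^ 2 / 2)) t :=
    intervalIntegral.integral_hasDerivAt_right
      (gauss_integrable.intervalIntegrable)
      gauss_continuous.aestronglyMeasurable.stronglyMeasurableAtFilter
      (gauss_continuous.continuousAt)
  simpa [Phi', mul_add] using ((hd.const_add (∫ τ in Set.Iic (0:ℝ), Real.exp (-τ ^ 2 / 2))).const_mul (Real.sqrt (Real.exp 1)))

lemma phi_nonneg (t : ℝ) : 0 ≤ Phi t := by
  unfold Phi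
  apply mul_nonneg (Real.sqrt_nonneg _)
  exact setIntegral_nonneg measurableSet_Iic (fun τ _ => (Real.exp_pos _).le)

lemma phi'_nonneg (t : ℝ) : 0 ≤ Phi' t := by unfold Phi'; positivity

lemma phi'_neg (t : ℝ) : Phi' (-t) = Phi' t := by simp [Phi', neg_sq]

lemma phi'_ge_one {t : ℝ} (h : |t| ≤ 1) : 1 ≤ Phi' t := by
  unfold Phi'
  have hs : Real.sqrt (Real.exp 1) = Real.exp (1/2) := by
    rw [show Real.exp 1 = Real.exp (1/2) ^ 2 by
      rw [← Real.exp_nat_mul]; norm_num, Real.sqrt_sq (Real.exp_pos _).le]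
  rw [hs, ← Real.exp_add, Real.one_le_exp_iff]
  have h2 : t ^ 2 ≤ 1 := by
    have := abs_le.mp h
    nlinarith
  linarith

lemma psi_differentiable : Differentiable ℝ Psi := fun t => (psi_hasDerivAt t).differentiableAt

lemma phi_differentiable : Differentiable ℝ Phi := fun t => (phi_hasDerivAt t).differentiableAt

lemma coord_differentiable (d i : ℕ) (h : i - 1 < d) :
    Differentiable ℝ (fun y : EuclideanSpace ℝ (Fin d) => coord d y i) := by
  have he : (fun y : EuclideanSpace ℝ (Fin d) => coord d y i)
      = fun y => EuclideanSpace.proj (⟨i - 1, h⟩ : Fin d) y := by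
    funext y; rw [coord, dif_pos h]; rfl
  rw [he]
  exact (EuclideanSpace.proj (⟨i - 1, h⟩ : Fin d) : EuclideanSpace ℝ (Fin d) →L[ℝ] ℝ).differentiable

lemma hchain_differentiable (d : ℕ) (hd : 1 ≤ d) : Differentiable ℝ (Hchain d) := by
  unfold Hchain
  apply Differentiable.add
  · exact (differentiable_const (-Psi 1)).mul
      (phi_differentiable.comp (coord_differentiable d 1 (by omega)))
  · apply Differentiable.fun_sum
    intro i hi
    obtain ⟨h2, hdle⟩ := Finset.mem_Icc.mp hi
    have hb : i - 1 < d := by omega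
    have ha : i - 1 - 1 < d := by omega
    exact ((psi_differentiable.comp (coord_differentiable d (i-1) ha).neg).mul
        (phi_differentiable.comp (coord_differentiable d i hb).neg)).sub
      ((psi_differentiable.comp (coord_differentiable d (i-1) ha)).mul
        (phi_differentiable.comp (coord_differentiable d i hb)))


noncomputable def eps (j i : ℕ) : ℝ := if i = j + 1 then 1 else 0

noncomputable def uu (d : ℕ) (x : EuclideanSpace ℝ (Fin d)) (j i : ℕ) (s : ℝ) : ℝ :=
  coord d x i + eps j i * s

lemma eps_nonneg (j i : ℕ) : 0 ≤ eps j i := by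
  unfold eps; split <;> norm_num

lemma uu_zero (d : ℕ) (x : EuclideanSpace ℝ (Fin d)) (j i : ℕ) :
    uu d x j i 0 = coord d x i := by simp [uu]

lemma uu_hasDerivAt (d : ℕ) (x : EuclideanSpace ℝ (Fin d)) (j i : ℕ) (s₀ : ℝ) :
    HasDerivAt (uu d x j i) (eps j i) s₀ := by
  unfold uu
  simpa using ((hasDerivAt_id s₀).const_mul (eps j i)).const_add (coord d x i)

noncomputable def dlt (d : ℕ) (x : EuclideanSpace ℝ (Fin d)) (j i : ℕ) : ℝ :=
  (Psi' (-coord d x (i - 1)) * -eps j (i - 1) * Phi (-coord d x i)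
    + Psi (-coord d x (i - 1)) * (Phi' (-coord d x i) * -eps j i))
  - (Psi' (coord d x (i - 1)) * eps j (i - 1) * Phi (coord d x i)
    + Psi (coord d x (i - 1)) * (Phi' (coord d x i) * eps j i))

lemma dlt_nonpos (d : ℕ) (x : EuclideanSpace ℝ (Fin d)) (j i : ℕ) : dlt d x j i ≤ 0 := by
  unfold dlt
  have t1 : 0 ≤ Psi' (-coord d x (i - 1)) * eps j (i - 1) * Phi (-coord d x i) :=
    mul_nonneg (mul_nonneg (psi'_nonneg _) (eps_nonneg _ _)) (phi_nonneg _)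
  have t2 : 0 ≤ Psi (-coord d x (i - 1)) * (Phi' (-coord d x i) * eps j i) :=
    mul_nonneg (psi_nonneg _) (mul_nonneg (phi'_nonneg _) (eps_nonneg _ _))
  have t3 : 0 ≤ Psi' (coord d x (i - 1)) * eps j (i - 1) * Phi (coord d x i) :=
    mul_nonneg (mul_nonneg (psi'_nonneg _) (eps_nonneg _ _)) (phi_nonneg _)
  have t4 : 0 ≤ Psi (coord d x (i - 1)) * (Phi' (coord d x i) * eps j i) :=
    mul_nonneg (psi_nonneg _) (mul_nonneg (phi'_nonneg _) (eps_nonneg _ _))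
  nlinarith [t1, t2, t3, t4]

lemma dlt_main (d : ℕ) (x : EuclideanSpace ℝ (Fin d)) (j : ℕ) (hj : 1 ≤ j)
    (ha : 1 < |coord d x j|) (hb : |coord d x (j + 1)| ≤ 1) :
    dlt d x j (j + 1) ≤ -1 := by
  unfold dlt
  rw [show j + 1 - 1 = j from rfl]
  have he1 : eps j (j + 1) = 1 := if_pos rfl
  have he0 : eps j j = 0 := if_neg (by omega)
  rw [he1, he0]
  set a := coord d x j
  set b := coord d x (j + 1)
  have hbn : |(-b)| ≤ 1 := by rwa [abs_neg]
  rcases lt_abs.mp ha with h | h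
  · -- 1 < a
    have h1 : 1 ≤ Psi a := psi_ge_one h
    have h2 : 1 ≤ Phi' b := phi'_ge_one hb
    have h3 : 0 ≤ Psi (-a) * Phi' (-b) :=
      mul_nonneg (psi_nonneg _) (phi'_nonneg _)
    nlinarith
  · -- 1 < -a
    have h1 : 1 ≤ Psi (-a) := psi_ge_one h
    have h2 : 1 ≤ Phi' (-b) := phi'_ge_one hbn
    have h3 : 0 ≤ Psi a * Phi' b :=
      mul_nonneg (psi_nonneg _) (phi'_nonneg _)
    nlinarith

lemma term_hasDerivAt (d : ℕ) (x : EuclideanSpace ℝ (Fin d)) (j i : ℕ) :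
    HasDerivAt (fun s => Psi (-uu d x j (i - 1) s) * Phi (-uu d x j i s)
      - Psi (uu d x j (i - 1) s) * Phi (uu d x j i s)) (dlt d x j i) 0 := by
  have hin1 : HasDerivAt (fun s => -uu d x j (i - 1) s) (-eps j (i - 1)) 0 :=
    (uu_hasDerivAt d x j (i - 1) 0).neg
  have hin2 : HasDerivAt (fun s => -uu d x j i s) (-eps j i) 0 :=
    (uu_hasDerivAt d x j i 0).neg
  have hPn : HasDerivAt (fun s => Psi (-uu d x j (i - 1) s))
      (Psi' (-coord d x (i - 1)) * -eps j (i - 1)) 0 := by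
    have ho : HasDerivAt Psi (Psi' (-coord d x (i - 1))) (-uu d x j (i - 1) 0) := by
      rw [uu_zero]; exact psi_hasDerivAt _
    exact ho.comp 0 hin1
  have hFn : HasDerivAt (fun s => Phi (-uu d x j i s))
      (Phi' (-coord d x i) * -eps j i) 0 := by
    have ho : HasDerivAt Phi (Phi' (-coord d x i)) (-uu d x j i 0) := by
      rw [uu_zero]; exact phi_hasDerivAt _
    have := ho.comp 0 hin2; exact this
  have hP : HasDerivAt (fun s => Psi (uu d x j (i - 1) s))
      (Psi' (coord d x (i - 1)) * eps j (i - 1)) 0 := by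
    have ho : HasDerivAt Psi (Psi' (coord d x (i - 1))) (uu d x j (i - 1) 0) := by
      rw [uu_zero]; exact psi_hasDerivAt _
    exact ho.comp 0 (uu_hasDerivAt d x j (i - 1) 0)
  have hF : HasDerivAt (fun s => Phi (uu d x j i s))
      (Phi' (coord d x i) * eps j i) 0 := by
    have ho : HasDerivAt Phi (Phi' (coord d x i)) (uu d x j i 0) := by
      rw [uu_zero]; exact phi_hasDerivAt _
    exact ho.comp 0 (uu_hasDerivAt d x j i 0)
  have hraw := (hPn.fun_mul hFn).fun_sub (hP.fun_mul hF)
  unfold dlt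
  simpa only [uu_zero] using hraw

lemma coord_line (d : ℕ) (x : EuclideanSpace ℝ (Fin d)) (k : Fin d) (s : ℝ) (i : ℕ)
    (h1 : 1 ≤ i) (h2 : i ≤ d) :
    coord d (x + s • EuclideanSpace.single k (1:ℝ)) i = uu d x k.val i s := by
  have hi : i - 1 < d := by omega
  rw [uu, eps, coord, coord, dif_pos hi, dif_pos hi]
  have hadd : (x + s • EuclideanSpace.single k (1:ℝ)) ⟨i - 1, hi⟩
      = x ⟨i - 1, hi⟩ + s * (if (⟨i - 1, hi⟩ : Fin d) = k then 1 else 0) := by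
    simp [PiLp.add_apply, PiLp.smul_apply, EuclideanSpace.single_apply, smul_eq_mul]
  rw [hadd]
  have hcond : ((⟨i - 1, hi⟩ : Fin d) = k) ↔ (i = k.val + 1) := by
    rw [Fin.ext_iff]
    simp only []
    constructor <;> (intro hh; omega)
  by_cases hc : i = k.val + 1
  · rw [if_pos (hcond.mpr hc), if_pos hc]; ring
  · rw [if_neg (fun hh => hc (hcond.mp hh)), if_neg hc]; ring

/-- Large-gradient property: if `prog_1(x) < d` then `‖∇H_d(x)‖ ≥ 1`. -/
theorem chain_gradient_lower_bound (d : ℕ) (hd : 1 ≤ d)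
    (x : EuclideanSpace ℝ (Fin d)) (hx : prog d 1 x < d) :
    1 ≤ ‖gradient (Hchain d) x‖ := by
  classical
  set j := prog d 1 x with hjdef
  set k : Fin d := ⟨j, hx⟩ with hkdef
  set v : EuclideanSpace ℝ (Fin d) := EuclideanSpace.single k (1:ℝ) with hvdef
  have hvnorm : ‖v‖ = 1 := by
    rw [hvdef, EuclideanSpace.norm_single]; norm_num
  have hprog : j = ((Finset.Icc 1 d).filter fun i => (1:ℝ) < |coord d x i|).sup id := by
    rw [hjdef, prog]
  set S : Finset ℕ := (Finset.Icc 1 d).filter fun i => (1:ℝ) < |coord d x i| with hSdef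
  -- progress facts
  have fact1 : |coord d x (j + 1)| ≤ 1 := by
    by_contra h1
    push_neg at h1
    have hmem : j + 1 ∈ S :=
      Finset.mem_filter.mpr ⟨Finset.mem_Icc.mpr ⟨by omega, by omega⟩, h1⟩
    have h2 : j + 1 ≤ S.sup id := Finset.le_sup (f := id) hmem
    omega
  have fact2 : 1 ≤ j → 1 < |coord d x j| := by
    intro hj1
    have hne : S.Nonempty := by
      rw [Finset.nonempty_iff_ne_empty]
      intro hemp
      rw [hprog, hemp] at hj1
      simp at hj1
    obtain ⟨b, hb, hbe⟩ := Finset.exists_mem_eq_sup S hne (id : ℕ → ℕ)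
    have hjb : j = b := by rw [hprog, hbe]; rfl
    obtain ⟨-, hb2⟩ := Finset.mem_filter.mp hb
    rwa [hjb]
  -- the line function and its derivative
  set D : ℝ := -Psi 1 * (Phi' (coord d x 1) * eps j 1) + ∑ i ∈ Finset.Icc 2 d, dlt d x j i
    with hDdef
  have hline_eq : (fun s : ℝ => Hchain d (x + s • v))
      = fun s => -Psi 1 * Phi (uu d x j 1 s) + ∑ i ∈ Finset.Icc 2 d,
          (Psi (-uu d x j (i - 1) s) * Phi (-uu d x j i s)
            - Psi (uu d x j (i - 1) s) * Phi (uu d x j i s)) := by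
    funext s
    unfold Hchain
    rw [hvdef, coord_line d x k s 1 le_rfl hd]
    refine congrArg₂ _ rfl (Finset.sum_congr rfl fun i hi => ?_)
    obtain ⟨h2, h3⟩ := Finset.mem_Icc.mp hi
    rw [coord_line d x k s i (by omega) h3,
      coord_line d x k s (i - 1) (by omega) (by omega)]
  have hlineD : HasDerivAt (fun s : ℝ => Hchain d (x + s • v)) D 0 := by
    rw [hline_eq, hDdef]
    apply HasDerivAt.add
    · have hF1 : HasDerivAt (fun s => Phi (uu d x j 1 s)) (Phi' (coord d x 1) * eps j 1) 0 := by
        have ho : HasDerivAt Phi (Phi' (coord d x 1)) (uu d x j 1 0) := by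
          rw [uu_zero]; exact phi_hasDerivAt _
        exact ho.comp 0 (uu_hasDerivAt d x j 1 0)
      exact hF1.const_mul (-Psi 1)
    · exact HasDerivAt.fun_sum fun i _ => term_hasDerivAt d x j i
  -- the derivative bound
  have hDle : D ≤ -1 := by
    rcases Nat.lt_or_ge j 1 with hj0 | hj1
    · have hj0' : j = 0 := by omega
      have he : eps j 1 = 1 := by rw [hj0']; exact if_pos rfl
      have h1 : 1 ≤ Phi' (coord d x 1) := by
        apply phi'_ge_one
        have := fact1
        rwa [hj0'] at this
      have hsum : ∑ i ∈ Finset.Icc 2 d, dlt d x j i ≤ 0 :=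
        Finset.sum_nonpos fun i _ => dlt_nonpos d x j i
      rw [hDdef, he, psi_one]
      nlinarith
    · have he : eps j 1 = 0 := if_neg (by omega)
      have hmem : j + 1 ∈ Finset.Icc 2 d := Finset.mem_Icc.mpr ⟨by omega, by omega⟩
      have hsum : ∑ i ∈ Finset.Icc 2 d, dlt d x j i ≤ -1 := by
        rw [← Finset.add_sum_erase _ _ hmem]
        have h1 : dlt d x j (j + 1) ≤ -1 := dlt_main d x j hj1 (fact2 hj1) fact1
        have h2 : ∑ i ∈ (Finset.Icc 2 d).erase (j + 1), dlt d x j i ≤ 0 :=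
          Finset.sum_nonpos fun i _ => dlt_nonpos d x j i
        linarith
      rw [hDdef, he]
      ring_nf
      linarith [hsum]
  -- connect to the gradient
  have hdiff : DifferentiableAt ℝ (Hchain d) x := hchain_differentiable d hd x
  have hg : HasDerivAt (fun s : ℝ => x + s • v) v 0 := by
    simpa using ((hasDerivAt_id (0:ℝ)).smul_const v).const_add x
  have hF : HasFDerivAt (Hchain d) (fderiv ℝ (Hchain d) x) ((fun s : ℝ => x + s • v) 0) := by
    have h0 : x + (0:ℝ) • v = x := by simp
    simpa [h0] using hdiff.hasFDerivAt
  have hcomp : HasDerivAt (fun s : ℝ => Hchain d (x + s • v))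
      (fderiv ℝ (Hchain d) x v) 0 := by have := hF.comp_hasDerivAt 0 hg; exact this
  have hDval : fderiv ℝ (Hchain d) x v = D := hcomp.unique hlineD
  have hgrad : (inner ℝ (gradient (Hchain d) x) v : ℝ) = fderiv ℝ (Hchain d) x v := by
    unfold gradient
    exact InnerProductSpace.toDual_symm_apply
  have habs : |D| ≤ ‖gradient (Hchain d) x‖ := by
    calc |D| = |(inner ℝ (gradient (Hchain d) x) v : ℝ)| := by rw [hgrad, hDval]
      _ ≤ ‖gradient (Hchain d) x‖ * ‖v‖ := abs_real_inner_le_norm _ _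
      _ = ‖gradient (Hchain d) x‖ := by rw [hvnorm, mul_one]
  have h1D : 1 ≤ |D| := by
    have : 1 ≤ -D := by linarith
    calc (1:ℝ) ≤ -D := this
      _ ≤ |D| := neg_le_abs D
  linarith
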